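/- Let K ≥ 2 and let η : {1,…,K} × {1,…,K} → (0,∞) satisfy: for every L ≥ 1 and all j_1,…,j_L ∈ {1,…,K}, the cyclic product η_{j_1→j_2} ⋯ η_{j_L→j_1} ≥ 1. Fix k ∈ {1,…,K}, set edge weights w(j,ℓ) = log η_{j→ℓ}, let m(ℓ) = min(ℓ→k) be the minimum weight over simple walks from ℓ to k (with m(k) = 0), and define θ* ∈ Δ by θ*_ℓ = exp(−m(ℓ)) / Σ_{ℓ'=1}^K exp(−m(ℓ')). Then θ* satisfies all the constraints: θ*_i ≤ η_{j→i} · θ*_j for all i, j ∈ {1,…,K}. -/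

import Mathlib

noncomputable section

/-- The weight of the walk `j 0, j 1, …, j m` for edge weights `w`. -/
def walkWeight (K : ℕ) (w : Fin K → Fin K → ℝ) (m : ℕ) (j : Fin (m + 1) → Fin K) : ℝ :=
  ∑ i : Fin m, w (j i.castSucc) (j i.succ)

/-- The minimum weight over simple walks (pairwise distinct vertices) from `a` to `b`. -/
def minWalk (K : ℕ) (w : Fin K → Fin K → ℝ) (a b : Fin K) : ℝ :=
  sInf {v : ℝ | ∃ (m : ℕ) (j : Fin (m + 1) → Fin K),
    j 0 = a ∧ j (Fin.last m) = b ∧ Function.Injective j ∧ v = walkWeight K w m j}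

namespace Stmt13Aux
variable {K : ℕ} (w : Fin K → Fin K → ℝ)

def walkSet (a b : Fin K) : Set ℝ :=
  {v : ℝ | ∃ (m : ℕ) (j : Fin (m + 1) → Fin K),
    j 0 = a ∧ j (Fin.last m) = b ∧ Function.Injective j ∧ v = walkWeight K w m j}

lemma minWalk_eq (a b : Fin K) : minWalk K w a b = sInf (walkSet w a b) := rfl

lemma walkSet_nonempty (a b : Fin K) : (walkSet w a b).Nonempty := by
  rcases eq_or_ne a b with rfl | hab
  · exact ⟨walkWeight K w 0 (fun _ => a), 0, fun _ => a, rfl, rfl,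
      fun x y _ => by omega, rfl⟩
  · refine ⟨walkWeight K w 1 ![a, b], 1, ![a, b], rfl, rfl, ?_, rfl⟩
    intro x y hxy
    fin_cases x <;> fin_cases y <;> simp_all [Matrix.cons_val_zero, Matrix.cons_val_one]

lemma walkSet_bddBelow (hK : 0 < K) (a b : Fin K) : BddBelow (walkSet w a b) := by
  haveI : NeZero K := ⟨hK.ne'⟩
  set B : ℝ := Finset.univ.inf' (Finset.univ_nonempty) (fun p : Fin K × Fin K => w p.1 p.2) with hB
  refine ⟨(K : ℝ) * min B 0, ?_⟩
  rintro v ⟨m, j, -, -, hinj, rfl⟩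
  have hmK : m ≤ K := by
    have := Fintype.card_le_of_injective j hinj
    exact (Nat.lt_of_succ_le (by simpa using this)).le
  have h1 : (K : ℝ) * min B 0 ≤ (m : ℝ) * min B 0 :=
    mul_le_mul_of_nonpos_right (by exact_mod_cast hmK) (min_le_right _ _)
  refine h1.trans ?_
  have h2 : (m : ℝ) * min B 0 = ∑ _i : Fin m, min B 0 := by simp [mul_comm]
  rw [h2, walkWeight]
  refine Finset.sum_le_sum fun i _ => ?_
  exact (min_le_left _ _).trans (Finset.inf'_le _ (Finset.mem_univ (j i.castSucc, j i.succ)))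

lemma cyc_sum (L : ℕ) (c : Fin (L + 1) → Fin K) :
    ∑ i : Fin (L + 1), w (c i) (c (i + 1)) =
      (∑ i : Fin L, w (c i.castSucc) (c i.succ)) + w (c (Fin.last L)) (c 0) := by
  rw [Fin.sum_univ_castSucc]
  congr 1
  · refine Finset.sum_congr rfl fun i _ => ?_
    congr 1
    have : (i.castSucc : Fin (L + 1)) + 1 = i.succ := by
      apply Fin.ext
      rw [Fin.val_add_one_of_lt (Fin.castSucc_lt_last i)]
      simp
    rw [this]
  · rw [Fin.last_add_one]

lemma cycle_nonneg_of (hcycw : ∀ (L : ℕ) (c : Fin (L + 1) → Fin K),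
      0 ≤ ∑ i : Fin (L + 1), w (c i) (c (i + 1)))
    (q : ℕ → Fin K) (s t : ℕ) (hst : s < t) (hq : q s = q t) :
    0 ≤ ∑ i ∈ Finset.Ico s t, w (q i) (q (i + 1)) := by
  set L := t - s - 1 with hL
  have hts : t - s = L + 1 := by omega
  set c : Fin (L + 1) → Fin K := fun i => q (s + i.val) with hc
  have h := hcycw L c
  rw [cyc_sum w L c] at h
  rw [Finset.sum_Ico_eq_sum_range, hts, Finset.sum_range_succ]
  refine le_trans h (le_of_eq ?_)
  have h2 : ∑ i : Fin L, w (c i.castSucc) (c i.succ) =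
      ∑ i ∈ Finset.range L, w (q (s + i)) (q (s + i + 1)) :=
    Fin.sum_univ_eq_sum_range (fun n => w (q (s + n)) (q (s + n + 1))) L
  have h3 : w (c (Fin.last L)) (c 0) = w (q (s + L)) (q (s + L + 1)) := by
    show w (q (s + L)) (q (s + 0)) = _
    rw [Nat.add_zero, hq, show t = s + L + 1 by omega]
  rw [h2, h3]

lemma key (hK : 0 < K) (k : Fin K)
    (hcycw : ∀ (L : ℕ) (c : Fin (L + 1) → Fin K),
      0 ≤ ∑ i : Fin (L + 1), w (c i) (c (i + 1))) :
    ∀ (m : ℕ) (q : ℕ → Fin K), q m = k →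
      minWalk K w (q 0) k ≤ ∑ i ∈ Finset.range m, w (q i) (q (i + 1)) := by
  intro m
  induction m using Nat.strong_induction_on with
  | _ m IH =>
    intro q hqm
    by_cases hinj : Function.Injective (fun i : Fin (m + 1) => q i.val)
    · apply csInf_le (walkSet_bddBelow w hK (q 0) k)
      refine ⟨m, fun i : Fin (m + 1) => q i.val, rfl, by simpa using hqm, hinj, ?_⟩
      exact (Fin.sum_univ_eq_sum_range (fun n => w (q n) (q (n + 1))) m).symm
    · simp only [Function.Injective, not_forall] at hinj
      obtain ⟨a, b, hab, hne⟩ := hinj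
      obtain ⟨s, t, hst, htm, hq⟩ : ∃ s t : ℕ, s < t ∧ t ≤ m ∧ q s = q t := by
        rcases lt_or_gt_of_ne (fun h => hne (Fin.ext h) : (a : ℕ) ≠ (b : ℕ)) with h | h
        · exact ⟨a, b, h, Nat.lt_succ_iff.mp b.isLt, hab⟩
        · exact ⟨b, a, h, Nat.lt_succ_iff.mp a.isLt, hab.symm⟩
      set q' : ℕ → Fin K := fun n => if n ≤ s then q n else q (n + (t - s)) with hq'
      set m' : ℕ := m - (t - s) with hm'
      have hsm' : s ≤ m' := by omega
      have hq'0 : q' 0 = q 0 := by simp [hq']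
      have hq'm' : q' m' = k := by
        rw [hq']
        by_cases h : m' ≤ s
        · have h1 : m' = s := by omega
          have h2 : t = m := by omega
          simp only [h, if_pos]
          rw [h1, hq, h2, hqm]
        · simp only [h, if_neg, not_false_iff]
          rw [show m' + (t - s) = m by omega, hqm]
      have hsplit : ∑ i ∈ Finset.range m, w (q i) (q (i + 1)) =
          (∑ i ∈ Finset.range m', w (q' i) (q' (i + 1))) +
            ∑ i ∈ Finset.Ico s t, w (q i) (q (i + 1)) := by
        have h1 : ∑ i ∈ Finset.range m, w (q i) (q (i + 1)) =
            (∑ i ∈ Finset.Ico 0 s, w (q i) (q (i + 1))) +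
              ((∑ i ∈ Finset.Ico s t, w (q i) (q (i + 1))) +
               ∑ i ∈ Finset.Ico t m, w (q i) (q (i + 1))) := by
          rw [Finset.sum_Ico_consecutive _ (by omega : s ≤ t) (by omega : t ≤ m),
            Finset.sum_Ico_consecutive _ (by omega : 0 ≤ s) (by omega : s ≤ m),
            Finset.range_eq_Ico]
        have h2 : ∑ i ∈ Finset.range m', w (q' i) (q' (i + 1)) =
            (∑ i ∈ Finset.Ico 0 s, w (q i) (q (i + 1))) +
              ∑ i ∈ Finset.Ico t m, w (q i) (q (i + 1)) := by
          rw [Finset.range_eq_Ico, ← Finset.sum_Ico_consecutive _ (by omega : 0 ≤ s) hsm']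
          congr 1
          · refine Finset.sum_congr rfl fun i hi => ?_
            simp only [Finset.mem_Ico] at hi
            simp only [hq']
            rw [if_pos (by omega), if_pos (by omega)]
          · rw [Finset.sum_Ico_eq_sum_range, Finset.sum_Ico_eq_sum_range,
              show m' - s = m - t by omega]
            refine Finset.sum_congr rfl fun i hi => ?_
            simp only [Finset.mem_range] at hi
            have hA : q' (s + i) = q (t + i) := by
              simp only [hq']
              by_cases h0 : i = 0
              · subst h0
                simp only [Nat.add_zero]
                rw [if_pos le_rfl, hq]
              · rw [if_neg (by omega)]
                congr 1
                omega
            have hB : q' (s + i + 1) = q (t + i + 1) := by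
              simp only [hq']
              rw [if_neg (by omega)]
              congr 1
              omega
            rw [hA, hB]
        rw [h1, h2]; ring
      have hcyc0 : 0 ≤ ∑ i ∈ Finset.Ico s t, w (q i) (q (i + 1)) :=
        cycle_nonneg_of w hcycw q s t hst hq
      have hIH := IH m' (by omega) q' hq'm'
      rw [hq'0] at hIH
      rw [hsplit]
      linarith
end Stmt13Aux

namespace Stmt13Aux
variable {K : ℕ} (w : Fin K → Fin K → ℝ)
lemma triangle (hK : 0 < K) (k : Fin K)
    (hcycw : ∀ (L : ℕ) (c : Fin (L + 1) → Fin K),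
      0 ≤ ∑ i : Fin (L + 1), w (c i) (c (i + 1)))
    (i j : Fin K) : minWalk K w j k ≤ w j i + minWalk K w i k := by
  rw [minWalk_eq w i k]
  have h : minWalk K w j k - w j i ≤ sInf (walkSet w i k) := by
    apply le_csInf (walkSet_nonempty w i k)
    rintro v ⟨mm, p, h0, hl, -, rfl⟩
    rw [sub_le_iff_le_add]
    set q : ℕ → Fin K := fun n => if n = 0 then j else
      p ⟨min (n - 1) mm, lt_of_le_of_lt (min_le_right _ _) (Nat.lt_succ_self mm)⟩ with hqdef
    have hterm : ∀ (n : ℕ) (hn : n ≤ mm), q (n + 1) =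
        p ⟨n, Nat.lt_succ_of_le hn⟩ := by
      intro n hn
      simp only [hqdef, Nat.add_sub_cancel, if_neg (Nat.succ_ne_zero n)]
      exact congrArg p (Fin.ext (min_eq_left hn))
    have hqlast : q (mm + 1) = k := by
      rw [hterm mm le_rfl, ← hl]
      exact congrArg p (Fin.ext rfl)
    have hkey := key w hK k hcycw (mm + 1) q hqlast
    have hq0 : q 0 = j := by simp [hqdef]
    rw [hq0] at hkey
    refine hkey.trans (le_of_eq ?_)
    rw [Finset.sum_range_succ']
    have hfirst : w (q 0) (q (0 + 1)) = w j i := by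
      rw [hq0, hterm 0 (Nat.zero_le mm), ← h0]
      exact congrArg (w j) (congrArg p (Fin.ext rfl))
    rw [hfirst]
    congr 1
    rw [walkWeight, ← Fin.sum_univ_eq_sum_range (fun n => w (q (n + 1)) (q (n + 1 + 1))) mm]
    refine Finset.sum_congr rfl fun x _ => ?_
    rw [hterm x.val (Nat.lt_succ_iff.mp (Nat.lt_succ_of_lt x.isLt)),
      hterm (x.val + 1) x.isLt]
    rfl
  linarith
end Stmt13Aux

theorem stmt13 (K : ℕ) (hK : 2 ≤ K) (η : Fin K → Fin K → ℝ)
    (hpos : ∀ k ℓ, 0 < η k ℓ)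
    (hcyc : ∀ (L : ℕ) (j : Fin (L + 1) → Fin K),
      1 ≤ ∏ i : Fin (L + 1), η (j i) (j (i + 1)))
    (k : Fin K) (m : Fin K → ℝ)
    (hm : ∀ ℓ, m ℓ = minWalk K (fun a b => Real.log (η a b)) ℓ k)
    (θ : Fin K → ℝ)
    (hθ : ∀ ℓ, θ ℓ = Real.exp (-(m ℓ)) / ∑ ℓ' : Fin K, Real.exp (-(m ℓ'))) :
    θ ∈ stdSimplex ℝ (Fin K) ∧ ∀ i j, θ i ≤ η j i * θ j := by
  have hK0 : 0 < K := by omega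
  haveI : NeZero K := ⟨hK0.ne'⟩
  set w : Fin K → Fin K → ℝ := fun a b => Real.log (η a b) with hw
  have hcycw : ∀ (L : ℕ) (c : Fin (L + 1) → Fin K),
      0 ≤ ∑ i : Fin (L + 1), w (c i) (c (i + 1)) := by
    intro L c
    have h1 := Real.log_nonneg (hcyc L c)
    rwa [Real.log_prod (fun i _ => (hpos _ _).ne')] at h1
  have tri : ∀ i j : Fin K, m j ≤ w j i + m i := by
    intro i j
    rw [hm j, hm i]
    exact Stmt13Aux.triangle w hK0 k hcycw i j
  set S : ℝ := ∑ ℓ' : Fin K, Real.exp (-(m ℓ')) with hS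
  have hSpos : 0 < S :=
    Finset.sum_pos (fun _ _ => Real.exp_pos _) Finset.univ_nonempty
  constructor
  · constructor
    · intro x
      rw [hθ x]
      positivity
    · simp_rw [hθ]
      rw [← Finset.sum_div, ← hS, div_self hSpos.ne']
  · intro i j
    rw [hθ i, hθ j, ← mul_div_assoc]
    apply div_le_div_of_nonneg_right ?_ hSpos.le
    rw [show η j i * Real.exp (-(m j)) = Real.exp (Real.log (η j i) + -(m j)) by
      rw [Real.exp_add, Real.exp_log (hpos j i)]]
    rw [Real.exp_le_exp]
    have := tri i j
    simp only [hw] at this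
    linarith
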